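/- Let R be a ring, M a right R-module, W = End_R(M), and α, β anti-endomorphisms of W. If there exists a unit u ∈ W such that the inner automorphism φ(w) = u w u⁻¹ satisfies φ ∘ α = β ∘ φ, then b_α and b_β are weakly isometric. Conversely, if b_α and b_β are both right regular and weakly isometric, then there exists a unit u ∈ W such that the inner automorphism φ(w) = u w u⁻¹ satisfies φ ∘ α = β ∘ φ. -/

import Mathlib

open MulOpposite TensorProduct Function

universe u v w v'

section Core

/-- An anti-endomorphism of a ring: additive, unital, reverses multiplication. -/
def IsAntiEndo {W : Type*} [Ring W] (α : W → W) : Prop :=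
  (∀ u v : W, α (u + v) = α u + α v) ∧ α 1 = 1 ∧ ∀ u v : W, α (u * v) = α v * α u

/-- An anti-automorphism of a ring: a bijective anti-endomorphism. -/
def IsAntiAuto {W : Type*} [Ring W] (α : W → W) : Prop :=
  IsAntiEndo α ∧ Function.Bijective α

/-- An inner automorphism of a ring: conjugation by a unit. -/
def IsInnerAut {W : Type*} [Ring W] (φ : W → W) : Prop :=
  ∃ u : Wˣ, ∀ w : W, φ w = ↑u * w * ↑u⁻¹

variable (R : Type u) [Ring R]

/-- A double `R`-module structure on the additive group `K`: two commuting
right `R`-module structures `m0` and `m1`. -/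
structure DoubleModule (K : Type v) [AddCommGroup K] where
  m0 : K → R → K
  m1 : K → R → K
  m0_add_left : ∀ (k k' : K) (r : R), m0 (k + k') r = m0 k r + m0 k' r
  m0_add_right : ∀ (k : K) (r r' : R), m0 k (r + r') = m0 k r + m0 k r'
  m0_mul : ∀ (k : K) (r r' : R), m0 k (r * r') = m0 (m0 k r) r'
  m0_one : ∀ k : K, m0 k 1 = k
  m1_add_left : ∀ (k k' : K) (r : R), m1 (k + k') r = m1 k r + m1 k' r
  m1_add_right : ∀ (k : K) (r r' : R), m1 k (r + r') = m1 k r + m1 k r'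
  m1_mul : ∀ (k : K) (r r' : R), m1 k (r * r') = m1 (m1 k r) r'
  m1_one : ∀ k : K, m1 k 1 = k
  comm : ∀ (k : K) (a b : R), m1 (m0 k a) b = m0 (m1 k b) a

variable {R}

/-- A homomorphism of double `R`-modules. -/
def IsDoubleHom {K : Type v} {K' : Type w} [AddCommGroup K] [AddCommGroup K']
    (DK : DoubleModule R K) (DK' : DoubleModule R K') (f : K → K') : Prop :=
  (∀ k k' : K, f (k + k') = f k + f k') ∧
  (∀ (k : K) (r : R), f (DK.m0 k r) = DK'.m0 (f k) r) ∧
  (∀ (k : K) (r : R), f (DK.m1 k r) = DK'.m1 (f k) r)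

/-- An isomorphism of double `R`-modules. -/
def IsDoubleIso {K : Type v} {K' : Type w} [AddCommGroup K] [AddCommGroup K']
    (DK : DoubleModule R K) (DK' : DoubleModule R K') (f : K → K') : Prop :=
  IsDoubleHom DK DK' f ∧ Function.Bijective f

/-- An anti-automorphism of a double `R`-module: an additive bijection exchanging
the two module structures. -/
def IsDoubleAntiAuto {K : Type v} [AddCommGroup K] (DK : DoubleModule R K) (θ : K → K) : Prop :=
  Function.Bijective θ ∧ (∀ k k' : K, θ (k + k') = θ k + θ k') ∧
  (∀ (k : K) (r : R), θ (DK.m0 k r) = DK.m1 (θ k) r) ∧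
  (∀ (k : K) (r : R), θ (DK.m1 k r) = DK.m0 (θ k) r)

variable (R)

/-- A general bilinear form on a right `R`-module `M` (encoded as a module over `Rᵐᵒᵖ`)
with values in a double `R`-module `(K, DK)`. -/
structure GBF (M : Type v) [AddCommGroup M] [Module Rᵐᵒᵖ M]
    (K : Type w) [AddCommGroup K] (DK : DoubleModule R K) where
  b : M → M → K
  add_left : ∀ x x' y : M, b (x + x') y = b x y + b x' y
  add_right : ∀ x y y' : M, b x (y + y') = b x y + b x y'
  smul_left : ∀ (x y : M) (r : R), b (op r • x) y = DK.m0 (b x y) r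
  smul_right : ∀ (x y : M) (r : R), b x (op r • y) = DK.m1 (b x y) r

variable {R}

namespace GBF

variable {M : Type v} [AddCommGroup M] [Module Rᵐᵒᵖ M]
  {K : Type w} [AddCommGroup K] {DK : DoubleModule R K}

/-- The right adjoint of `β` is injective. -/
def RightInjective (β : GBF R M K DK) : Prop :=
  ∀ x x' : M, (∀ y : M, β.b y x = β.b y x') → x = x'

/-- The right adjoint of `β` is bijective onto `Hom_R(M, K₀)`. -/
def RightRegular (β : GBF R M K DK) : Prop :=
  β.RightInjective ∧
  ∀ f : M → K, (∀ y y' : M, f (y + y') = f y + f y') →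
    (∀ (y : M) (r : R), f (op r • y) = DK.m0 (f y) r) →
    ∃ x : M, ∀ y : M, f y = β.b y x

/-- The left adjoint of `β` is injective. -/
def LeftInjective (β : GBF R M K DK) : Prop :=
  ∀ x x' : M, (∀ y : M, β.b x y = β.b x' y) → x = x'

/-- The left adjoint of `β` is bijective onto `Hom_R(M, K₁)`. -/
def LeftRegular (β : GBF R M K DK) : Prop :=
  β.LeftInjective ∧
  ∀ f : M → K, (∀ y y' : M, f (y + y') = f y + f y') →
    (∀ (y : M) (r : R), f (op r • y) = DK.m1 (f y) r) →
    ∃ x : M, ∀ y : M, f y = β.b x y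

/-- `α` is an adjoint anti-endomorphism for `β`: `β(w x, y) = β(x, α(w) y)`. -/
def IsAdjoint (β : GBF R M K DK) (α : Module.End Rᵐᵒᵖ M → Module.End Rᵐᵒᵖ M) : Prop :=
  ∀ (w : Module.End Rᵐᵒᵖ M) (x y : M), β.b (w x) y = β.b x (α w y)

/-- Similarity of general bilinear forms on the same module. -/
def Similar {K' : Type v'} [AddCommGroup K'] {DK' : DoubleModule R K'}
    (β : GBF R M K DK) (β' : GBF R M K' DK') : Prop :=
  ∃ f : K → K', IsDoubleIso DK DK' f ∧ ∀ x y : M, β'.b x y = f (β.b x y)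

end GBF

section Kalpha

variable {M : Type v} [AddCommGroup M] [Module Rᵐᵒᵖ M]

/-- The subgroup of `M ⊗_ℤ M` generated by the elements `(w x) ⊗ y - x ⊗ (α w y)`. -/
def kalphaRel (α : Module.End Rᵐᵒᵖ M → Module.End Rᵐᵒᵖ M) : Submodule ℤ (M ⊗[ℤ] M) :=
  Submodule.span ℤ
    {z | ∃ (w : Module.End Rᵐᵒᵖ M) (x y : M), z = (w x) ⊗ₜ[ℤ] y - x ⊗ₜ[ℤ] (α w y)}

/-- `K_α`, the quotient of `M ⊗_ℤ M` by the relations `(w x) ⊗ y = x ⊗ (α w y)`. -/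
abbrev Kalpha (α : Module.End Rᵐᵒᵖ M → Module.End Rᵐᵒᵖ M) : Type _ :=
  (M ⊗[ℤ] M) ⧸ kalphaRel α

/-- The map `x ⊗ y ↦ (x·r) ⊗ y` on `M ⊗_ℤ M`. -/
noncomputable def smulLeftMap (r : R) : (M ⊗[ℤ] M) →ₗ[ℤ] (M ⊗[ℤ] M) :=
  TensorProduct.map ((DistribMulAction.toAddMonoidHom M (op r : Rᵐᵒᵖ)).toIntLinearMap)
    LinearMap.id

/-- The map `x ⊗ y ↦ x ⊗ (y·r)` on `M ⊗_ℤ M`. -/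
noncomputable def smulRightMap (r : R) : (M ⊗[ℤ] M) →ₗ[ℤ] (M ⊗[ℤ] M) :=
  TensorProduct.map LinearMap.id
    ((DistribMulAction.toAddMonoidHom M (op r : Rᵐᵒᵖ)).toIntLinearMap)

theorem kalphaRel_le_left (α : Module.End Rᵐᵒᵖ M → Module.End Rᵐᵒᵖ M) (r : R) :
    kalphaRel α ≤ (kalphaRel α).comap (smulLeftMap (M := M) r) := by
  rw [kalphaRel, Submodule.span_le]
  rintro _ ⟨w, x, y, rfl⟩
  rw [SetLike.mem_coe, Submodule.mem_comap, map_sub]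
  have h1 : smulLeftMap (M := M) r ((w x) ⊗ₜ[ℤ] y) = (w (op r • x)) ⊗ₜ[ℤ] y := by
    (simp [smulLeftMap, map_smul]) <;> rfl
  have h2 : smulLeftMap (M := M) r (x ⊗ₜ[ℤ] (α w y)) = (op r • x) ⊗ₜ[ℤ] (α w y) := by
    (simp [smulLeftMap]) <;> rfl
  rw [h1, h2]
  exact Submodule.subset_span ⟨w, op r • x, y, rfl⟩

theorem kalphaRel_le_right (α : Module.End Rᵐᵒᵖ M → Module.End Rᵐᵒᵖ M) (r : R) :
    kalphaRel α ≤ (kalphaRel α).comap (smulRightMap (M := M) r) := by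
  rw [kalphaRel, Submodule.span_le]
  rintro _ ⟨w, x, y, rfl⟩
  rw [SetLike.mem_coe, Submodule.mem_comap, map_sub]
  have h1 : smulRightMap (M := M) r ((w x) ⊗ₜ[ℤ] y) = (w x) ⊗ₜ[ℤ] (op r • y) := by
    (simp [smulRightMap]) <;> rfl
  have h2 : smulRightMap (M := M) r (x ⊗ₜ[ℤ] (α w y)) = x ⊗ₜ[ℤ] (α w (op r • y)) := by
    (simp [smulRightMap, map_smul]) <;> rfl
  rw [h1, h2]
  exact Submodule.subset_span ⟨w, x, op r • y, rfl⟩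

/-- The `m0`-action on `K_α`. -/
noncomputable def kSmul0 (α : Module.End Rᵐᵒᵖ M → Module.End Rᵐᵒᵖ M) (r : R) :
    Kalpha α →ₗ[ℤ] Kalpha α :=
  Submodule.mapQ _ _ (smulLeftMap r) (kalphaRel_le_left α r)

/-- The `m1`-action on `K_α`. -/
noncomputable def kSmul1 (α : Module.End Rᵐᵒᵖ M → Module.End Rᵐᵒᵖ M) (r : R) :
    Kalpha α →ₗ[ℤ] Kalpha α :=
  Submodule.mapQ _ _ (smulRightMap r) (kalphaRel_le_right α r)

theorem kSmul0_mk (α : Module.End Rᵐᵒᵖ M → Module.End Rᵐᵒᵖ M) (r : R) (t : M ⊗[ℤ] M) :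
    kSmul0 α r (Submodule.Quotient.mk t) = Submodule.Quotient.mk (smulLeftMap r t) := rfl

theorem kSmul1_mk (α : Module.End Rᵐᵒᵖ M → Module.End Rᵐᵒᵖ M) (r : R) (t : M ⊗[ℤ] M) :
    kSmul1 α r (Submodule.Quotient.mk t) = Submodule.Quotient.mk (smulRightMap r t) := rfl

/-- The double `R`-module structure on `K_α`. -/
noncomputable def KalphaDM (α : Module.End Rᵐᵒᵖ M → Module.End Rᵐᵒᵖ M) :
    DoubleModule R (Kalpha α) where
  m0 k r := kSmul0 α r k
  m1 k r := kSmul1 α r k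
  m0_add_left k k' r := map_add _ k k'
  m0_add_right := by
    intro k r r'
    try dsimp only
    induction k using Submodule.Quotient.induction_on with
    | _ t =>
      rw [kSmul0_mk, kSmul0_mk, kSmul0_mk, ← Submodule.Quotient.mk_add]
      congr 1
      induction t with
      | zero => simp
      | tmul x y =>
        show (op (r + r') • x) ⊗ₜ[ℤ] y = (op r • x) ⊗ₜ[ℤ] y + (op r' • x) ⊗ₜ[ℤ] y
        simp [smulLeftMap, op_add, add_smul, TensorProduct.add_tmul]
      | add a b ha hb => rw [map_add, map_add, map_add, ha, hb]; abel
  m0_mul := by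
    intro k r r'
    try dsimp only
    induction k using Submodule.Quotient.induction_on with
    | _ t =>
      rw [kSmul0_mk, kSmul0_mk, kSmul0_mk]
      congr 1
      induction t with
      | zero => simp
      | tmul x y =>
        show (op (r * r') • x) ⊗ₜ[ℤ] y = (op r' • op r • x) ⊗ₜ[ℤ] y
        simp [smulLeftMap, op_mul, mul_smul]
      | add a b ha hb => rw [map_add, map_add, map_add, ha, hb]
  m0_one := by
    intro k
    try dsimp only
    induction k using Submodule.Quotient.induction_on with
    | _ t =>
      rw [kSmul0_mk]
      congr 1
      induction t with
      | zero => simp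
      | tmul x y =>
        show (op (1 : R) • x) ⊗ₜ[ℤ] y = x ⊗ₜ[ℤ] y
        simp [smulLeftMap]
      | add a b ha hb => rw [map_add, ha, hb]
  m1_add_left k k' r := map_add _ k k'
  m1_add_right := by
    intro k r r'
    try dsimp only
    induction k using Submodule.Quotient.induction_on with
    | _ t =>
      rw [kSmul1_mk, kSmul1_mk, kSmul1_mk, ← Submodule.Quotient.mk_add]
      congr 1
      induction t with
      | zero => simp
      | tmul x y =>
        show x ⊗ₜ[ℤ] (op (r + r') • y) = x ⊗ₜ[ℤ] (op r • y) + x ⊗ₜ[ℤ] (op r' • y)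
        simp [smulRightMap, op_add, add_smul, TensorProduct.tmul_add]
      | add a b ha hb => rw [map_add, map_add, map_add, ha, hb]; abel
  m1_mul := by
    intro k r r'
    try dsimp only
    induction k using Submodule.Quotient.induction_on with
    | _ t =>
      rw [kSmul1_mk, kSmul1_mk, kSmul1_mk]
      congr 1
      induction t with
      | zero => simp
      | tmul x y =>
        show x ⊗ₜ[ℤ] (op (r * r') • y) = x ⊗ₜ[ℤ] (op r' • op r • y)
        simp [smulRightMap, op_mul, mul_smul]
      | add a b ha hb => rw [map_add, map_add, map_add, ha, hb]
  m1_one := by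
    intro k
    try dsimp only
    induction k using Submodule.Quotient.induction_on with
    | _ t =>
      rw [kSmul1_mk]
      congr 1
      induction t with
      | zero => simp
      | tmul x y =>
        show x ⊗ₜ[ℤ] (op (1 : R) • y) = x ⊗ₜ[ℤ] y
        simp [smulRightMap]
      | add a b ha hb => rw [map_add, ha, hb]
  comm := by
    intro k a c
    try dsimp only
    induction k using Submodule.Quotient.induction_on with
    | _ t =>
      rw [kSmul0_mk, kSmul1_mk, kSmul1_mk, kSmul0_mk]
      congr 1
      induction t with
      | zero => simp
      | tmul x y => rfl
      | add p q hp hq => rw [map_add, map_add, map_add, map_add, hp, hq]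

/-- The universal general bilinear form `b_α : M × M → K_α`. -/
noncomputable def balpha (α : Module.End Rᵐᵒᵖ M → Module.End Rᵐᵒᵖ M) :
    GBF R M (Kalpha α) (KalphaDM α) where
  b x y := Submodule.Quotient.mk (x ⊗ₜ[ℤ] y)
  add_left x x' y := by
    try dsimp only
    rw [TensorProduct.add_tmul, Submodule.Quotient.mk_add]
  add_right x y y' := by
    try dsimp only
    rw [TensorProduct.tmul_add, Submodule.Quotient.mk_add]
  smul_left x y r := by
    show _ = kSmul0 α r (Submodule.Quotient.mk (x ⊗ₜ[ℤ] y))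
    rw [kSmul0_mk]
    congr 1
  smul_right x y r := by
    show _ = kSmul1 α r (Submodule.Quotient.mk (x ⊗ₜ[ℤ] y))
    rw [kSmul1_mk]
    congr 1

end Kalpha

end Core


section Aux

variable {R : Type u} [Ring R] {M : Type v} [AddCommGroup M] [Module Rᵐᵒᵖ M]

theorem balpha_adjoint (α : Module.End Rᵐᵒᵖ M → Module.End Rᵐᵒᵖ M)
    (w : Module.End Rᵐᵒᵖ M) (x y : M) :
    (balpha (R := R) α).b (w x) y = (balpha α).b x (α w y) := by
  show (Submodule.Quotient.mk _ : Kalpha α) = Submodule.Quotient.mk _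
  rw [Submodule.Quotient.eq]
  exact Submodule.subset_span ⟨w, x, y, rfl⟩

/-- An `Rᵐᵒᵖ`-endomorphism viewed as a `ℤ`-linear map. -/
def endoZ (w : Module.End Rᵐᵒᵖ M) : M →ₗ[ℤ] M := w.toAddMonoidHom.toIntLinearMap

theorem endoZ_apply (w : Module.End Rᵐᵒᵖ M) (m : M) : endoZ w m = w m := rfl

theorem units_inv_mul_apply (u : (Module.End Rᵐᵒᵖ M)ˣ) (m : M) :
    (↑u⁻¹ : Module.End Rᵐᵒᵖ M) ((↑u : Module.End Rᵐᵒᵖ M) m) = m := by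
  rw [← Module.End.mul_apply, u.inv_mul, Module.End.one_apply]

theorem units_mul_inv_apply (u : (Module.End Rᵐᵒᵖ M)ˣ) (m : M) :
    (↑u : Module.End Rᵐᵒᵖ M) ((↑u⁻¹ : Module.End Rᵐᵒᵖ M) m) = m := by
  rw [← Module.End.mul_apply, u.mul_inv, Module.End.one_apply]

theorem tensorMap_rel (α β : Module.End Rᵐᵒᵖ M → Module.End Rᵐᵒᵖ M)
    (u : (Module.End Rᵐᵒᵖ M)ˣ)
    (hu : ∀ w : Module.End Rᵐᵒᵖ M, ↑u * α w * ↑u⁻¹ = β (↑u * w * ↑u⁻¹)) :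
    kalphaRel (R := R) α ≤
      (kalphaRel (R := R) β).comap (TensorProduct.map (endoZ (u : Module.End Rᵐᵒᵖ M)) (endoZ (u : Module.End Rᵐᵒᵖ M))) := by
  refine (Submodule.span_le (p := (kalphaRel (R := R) β).comap (TensorProduct.map (endoZ (u : Module.End Rᵐᵒᵖ M)) (endoZ (u : Module.End Rᵐᵒᵖ M))))).mpr ?_
  rintro _ ⟨w, x, y, rfl⟩
  erw [SetLike.mem_coe, Submodule.mem_comap, map_sub]
  have h1 : TensorProduct.map (endoZ (↑u : Module.End Rᵐᵒᵖ M)) (endoZ (↑u : Module.End Rᵐᵒᵖ M)) ((w x) ⊗ₜ[ℤ] y) =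
      ((↑u * w * ↑u⁻¹ : Module.End Rᵐᵒᵖ M) ((↑u : Module.End Rᵐᵒᵖ M) x)) ⊗ₜ[ℤ]
        ((↑u : Module.End Rᵐᵒᵖ M) y) := by
    rw [TensorProduct.map_tmul, endoZ_apply, endoZ_apply,
      Module.End.mul_apply, Module.End.mul_apply, units_inv_mul_apply]
  have h2 : TensorProduct.map (endoZ (↑u : Module.End Rᵐᵒᵖ M)) (endoZ (↑u : Module.End Rᵐᵒᵖ M)) (x ⊗ₜ[ℤ] (α w y)) =
      ((↑u : Module.End Rᵐᵒᵖ M) x) ⊗ₜ[ℤ]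
        (β (↑u * w * ↑u⁻¹) ((↑u : Module.End Rᵐᵒᵖ M) y)) := by
    rw [TensorProduct.map_tmul, endoZ_apply, endoZ_apply, ← hu w,
      Module.End.mul_apply, Module.End.mul_apply, units_inv_mul_apply]
  erw [h1, h2]
  exact Submodule.subset_span ⟨↑u * w * ↑u⁻¹, (↑u : Module.End Rᵐᵒᵖ M) x,
    (↑u : Module.End Rᵐᵒᵖ M) y, rfl⟩

theorem hu_inv (α β : Module.End Rᵐᵒᵖ M → Module.End Rᵐᵒᵖ M)
    (u : (Module.End Rᵐᵒᵖ M)ˣ)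
    (hu : ∀ w : Module.End Rᵐᵒᵖ M, ↑u * α w * ↑u⁻¹ = β (↑u * w * ↑u⁻¹)) :
    ∀ w : Module.End Rᵐᵒᵖ M, ↑u⁻¹ * β w * ↑u⁻¹⁻¹ = α (↑u⁻¹ * w * ↑u⁻¹⁻¹) := by
  intro w
  rw [inv_inv]
  have h := hu (↑u⁻¹ * w * ↑u)
  have h2 : (↑u * (↑u⁻¹ * w * ↑u) * ↑u⁻¹ : Module.End Rᵐᵒᵖ M) = w := by
    rw [← mul_assoc, ← mul_assoc, u.mul_inv, one_mul, mul_assoc, u.mul_inv, mul_one]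
  rw [h2] at h
  rw [← h, ← mul_assoc, ← mul_assoc, u.inv_mul, one_mul, mul_assoc, u.inv_mul, mul_one]

end Aux

/-- `b_α` and `b_β` are weakly isometric iff (given right regularity for the
converse) there is an inner automorphism `φ(w) = u w u⁻¹` with `φ ∘ α = β ∘ φ`. -/
theorem stmt_3 {R : Type u} [Ring R] {M : Type v} [AddCommGroup M] [Module Rᵐᵒᵖ M]
    (α β : Module.End Rᵐᵒᵖ M → Module.End Rᵐᵒᵖ M)
    (hα : IsAntiEndo α) (hβ : IsAntiEndo β) :
    ((∃ u : (Module.End Rᵐᵒᵖ M)ˣ,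
        ∀ w : Module.End Rᵐᵒᵖ M, ↑u * α w * ↑u⁻¹ = β (↑u * w * ↑u⁻¹)) →
      ∃ (σ : Module.End Rᵐᵒᵖ M) (f : Kalpha (M := M) α → Kalpha (M := M) β),
        Function.Bijective σ ∧ IsDoubleIso (KalphaDM α) (KalphaDM β) f ∧
        ∀ x y : M, (balpha β).b (σ x) (σ y) = f ((balpha α).b x y)) ∧
    ((balpha α).RightRegular → (balpha β).RightRegular →
      (∃ (σ : Module.End Rᵐᵒᵖ M) (f : Kalpha (M := M) α → Kalpha (M := M) β),
        Function.Bijective σ ∧ IsDoubleIso (KalphaDM α) (KalphaDM β) f ∧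
        ∀ x y : M, (balpha β).b (σ x) (σ y) = f ((balpha α).b x y)) →
      ∃ u : (Module.End Rᵐᵒᵖ M)ˣ,
        ∀ w : Module.End Rᵐᵒᵖ M, ↑u * α w * ↑u⁻¹ = β (↑u * w * ↑u⁻¹)) := by
  constructor
  · rintro ⟨u, hu⟩
    have hF := tensorMap_rel α β u hu
    have hG := tensorMap_rel β α u⁻¹ (hu_inv α β u hu)
    set F : (M ⊗[ℤ] M) →ₗ[ℤ] (M ⊗[ℤ] M) :=
      TensorProduct.map (endoZ (↑u : Module.End Rᵐᵒᵖ M)) (endoZ (↑u : Module.End Rᵐᵒᵖ M)) with hFdef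
    set G : (M ⊗[ℤ] M) →ₗ[ℤ] (M ⊗[ℤ] M) :=
      TensorProduct.map (endoZ (↑u⁻¹ : Module.End Rᵐᵒᵖ M)) (endoZ (↑u⁻¹ : Module.End Rᵐᵒᵖ M)) with hGdef
    set f := Submodule.mapQ (kalphaRel α) (kalphaRel β) F hF with hfdef
    set g := Submodule.mapQ (kalphaRel β) (kalphaRel α) G hG with hgdef
    have hgf : ∀ k : Kalpha (M := M) α, g (f k) = k := by
      intro k
      induction k using Submodule.Quotient.induction_on with
      | _ t =>
        rw [Submodule.mapQ_apply, Submodule.mapQ_apply]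
        congr 1
        induction t with
        | zero => simp
        | tmul x y =>
          erw [hFdef, hGdef, TensorProduct.map_tmul]
          simp only [endoZ_apply, units_inv_mul_apply]
        | add a b ha hb => rw [map_add, map_add, ha, hb]
    have hfg : ∀ k : Kalpha (M := M) β, f (g k) = k := by
      intro k
      induction k using Submodule.Quotient.induction_on with
      | _ t =>
        rw [Submodule.mapQ_apply, Submodule.mapQ_apply]
        congr 1
        induction t with
        | zero => simp
        | tmul x y =>
          erw [hFdef, hGdef, TensorProduct.map_tmul]
          simp only [endoZ_apply, units_mul_inv_apply]
        | add a b ha hb => rw [map_add, map_add, ha, hb]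
    refine ⟨(↑u : Module.End Rᵐᵒᵖ M), f, ?_, ⟨⟨fun k k' => map_add f k k', ?_, ?_⟩, ?_⟩, ?_⟩
    · exact ⟨fun a b h => by
        rw [← units_inv_mul_apply u a, h, units_inv_mul_apply],
        fun m => ⟨(↑u⁻¹ : Module.End Rᵐᵒᵖ M) m, units_mul_inv_apply u m⟩⟩
    · -- m0 compatibility
      intro k r
      show f (kSmul0 α r k) = kSmul0 β r (f k)
      induction k using Submodule.Quotient.induction_on with
      | _ t =>
        rw [Submodule.mapQ_apply, kSmul0_mk, kSmul0_mk, Submodule.mapQ_apply]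
        congr 1
        induction t with
        | zero => simp
        | tmul x y =>
          rw [hFdef]
          simp only [smulLeftMap, TensorProduct.map_tmul, endoZ_apply,
            AddMonoidHom.coe_toIntLinearMap, DistribMulAction.toAddMonoidHom_apply,
            LinearMap.id_apply]
          erw [TensorProduct.map_tmul, TensorProduct.map_tmul]
          exact congrArg₂ (· ⊗ₜ[ℤ] ·) (map_smul (↑u : Module.End Rᵐᵒᵖ M) (op r) x) rfl
        | add a b ha hb =>
          rw [map_add, map_add, map_add, map_add, ha, hb]
    · -- m1 compatibility
      intro k r
      show f (kSmul1 α r k) = kSmul1 β r (f k)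
      induction k using Submodule.Quotient.induction_on with
      | _ t =>
        rw [Submodule.mapQ_apply, kSmul1_mk, kSmul1_mk, Submodule.mapQ_apply]
        congr 1
        induction t with
        | zero => simp
        | tmul x y =>
          rw [hFdef]
          simp only [smulRightMap, TensorProduct.map_tmul, endoZ_apply,
            AddMonoidHom.coe_toIntLinearMap, DistribMulAction.toAddMonoidHom_apply,
            LinearMap.id_apply]
          erw [TensorProduct.map_tmul, TensorProduct.map_tmul]
          exact congrArg₂ (· ⊗ₜ[ℤ] ·) rfl (map_smul (↑u : Module.End Rᵐᵒᵖ M) (op r) y)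
        | add a b ha hb =>
          rw [map_add, map_add, map_add, map_add, ha, hb]
    · exact ⟨fun a b h => by rw [← hgf a, h, hgf b], fun k => ⟨g k, hfg k⟩⟩
    · intro x y
      show (Submodule.Quotient.mk _ : Kalpha β) = f (Submodule.Quotient.mk _)
      erw [Submodule.mapQ_apply, hFdef, TensorProduct.map_tmul]
      rfl
  · rintro hra hrb ⟨σ, f, hσ, hf, hiso⟩
    let e : M ≃ₗ[Rᵐᵒᵖ] M := LinearEquiv.ofBijective σ hσ
    set τ : Module.End Rᵐᵒᵖ M := e.symm.toLinearMap with hτdef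
    have hστ : ∀ m : M, σ (τ m) = m := fun m => e.apply_symm_apply m
    have hτσ : ∀ m : M, τ (σ m) = m := fun m => e.symm_apply_apply m
    refine ⟨⟨σ, τ, ?_, ?_⟩, ?_⟩
    · ext m; exact hστ m
    · ext m; exact hτσ m
    · intro w
      set w' : Module.End Rᵐᵒᵖ M := σ * w * τ with hw'def
      have hw' : ∀ m : M, w' (σ m) = σ (w m) := by
        intro m
        rw [hw'def, Module.End.mul_apply, Module.End.mul_apply, hτσ]
      have key : ∀ z : M, σ (α w z) = β w' (σ z) := by
        intro z
        apply hrb.1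
        intro y
        obtain ⟨x, rfl⟩ := hσ.2 y
        calc (balpha β).b (σ x) (σ (α w z))
            = f ((balpha α).b x (α w z)) := hiso x (α w z)
          _ = f ((balpha α).b (w x) z) := by rw [balpha_adjoint]
          _ = (balpha β).b (σ (w x)) (σ z) := (hiso (w x) z).symm
          _ = (balpha β).b (w' (σ x)) (σ z) := by rw [hw']
          _ = (balpha β).b (σ x) (β w' (σ z)) := balpha_adjoint β w' (σ x) (σ z)
      show σ * α w * τ = β (σ * w * τ)
      ext y
      rw [Module.End.mul_apply, Module.End.mul_apply, key (τ y), ← hw'def, hστ]
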